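/- Let A be a random q × d matrix with nonnegative bounded entries, independent of independent nonnegative random variables V₁, …, V_d with P(V_j > t) ~ K_j t^{-α}. Then for each i ∈ {1,…,q}, P((AV)_i > t) ~ (Σ_{j=1}^d K_j E[A_{ij}^α]) · t^{-α} as t → ∞, provided Σ_j K_j E[A_{ij}^α] > 0. -/

import Mathlib

open MeasureTheory ProbabilityTheory Filter Real

lemma aux_prod_one_sub {ι : Type*} (s : Finset ι) (p : ι → ℝ)
    (h0 : ∀ i ∈ s, 0 ≤ p i) (h1 : ∀ i ∈ s, p i ≤ 1) :
    ∏ i ∈ s, (1 - p i) ≤ 1 - ∑ i ∈ s, p i + (∑ i ∈ s, p i) ^ 2 := by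
  classical
  induction s using Finset.induction_on with
  | empty => simp
  | @insert a s ha ih =>
    have hpa0 := h0 a (Finset.mem_insert_self a s)
    have hpa1 := h1 a (Finset.mem_insert_self a s)
    have h0' : ∀ i ∈ s, 0 ≤ p i := fun i hi => h0 i (Finset.mem_insert_of_mem hi)
    have h1' : ∀ i ∈ s, p i ≤ 1 := fun i hi => h1 i (Finset.mem_insert_of_mem hi)
    have hS : 0 ≤ ∑ i ∈ s, p i := Finset.sum_nonneg h0'
    rw [Finset.prod_insert ha, Finset.sum_insert ha]
    calc (1 - p a) * ∏ i ∈ s, (1 - p i)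
        ≤ (1 - p a) * (1 - ∑ i ∈ s, p i + (∑ i ∈ s, p i) ^ 2) :=
          mul_le_mul_of_nonneg_left (ih h0' h1') (by linarith)
      _ ≤ _ := by nlinarith [mul_nonneg hpa0 hS, mul_nonneg (mul_nonneg hpa0 hS) hS,
          sq_nonneg (p a)]

lemma aux_to_zero {g : ℝ → ℝ} {α L : ℝ} (hα : 0 < α)
    (h : Tendsto (fun t => t ^ α * g t) atTop (nhds L)) :
    Tendsto g atTop (nhds 0) := by
  have h2 : Tendsto (fun t : ℝ => t ^ (-α) * (t ^ α * g t)) atTop (nhds (0 * L)) :=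
    (tendsto_rpow_neg_atTop hα).mul h
  rw [zero_mul] at h2
  refine Tendsto.congr' ?_ h2
  filter_upwards [eventually_gt_atTop 0] with t ht
  rw [← mul_assoc, ← Real.rpow_add ht, neg_add_cancel, Real.rpow_zero, one_mul]

lemma tail_scaled {Ω : Type*} [MeasurableSpace Ω] (μ : Measure Ω)
    [IsProbabilityMeasure μ] (W : Ω → ℝ) {K α : ℝ} (hα : 0 < α)
    (htail : Tendsto (fun t : ℝ => t ^ α * (μ {ω | t < W ω}).toReal) atTop (nhds K))
    {c s : ℝ} (hc : 0 ≤ c) (hs : 0 < s) :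
    Tendsto (fun t : ℝ => t ^ α * (μ {ω | s * t < c * W ω}).toReal) atTop
      (nhds (K * c ^ α / s ^ α)) := by
  rcases eq_or_lt_of_le hc with hc0 | hc0
  · have hz : K * c ^ α / s ^ α = 0 := by
      rw [← hc0, Real.zero_rpow hα.ne', mul_zero, zero_div]
    rw [hz]
    refine Tendsto.congr' ?_ (tendsto_const_nhds (x := (0:ℝ)))
    filter_upwards [eventually_gt_atTop 0] with t ht
    have hempty : {ω : Ω | s * t < c * W ω} = ∅ := by
      ext ω
      simp only [Set.mem_setOf_eq, Set.mem_empty_iff_false, iff_false, not_lt, ← hc0, zero_mul]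
      positivity
    rw [hempty]
    simp
  · have hlin : Tendsto (fun t : ℝ => s * t / c) atTop atTop :=
      (tendsto_id.const_mul_atTop hs).atTop_div_const hc0
    have h1 := htail.comp hlin
    have h2 := h1.const_mul ((c / s) ^ α)
    have hlim : (c / s) ^ α * K = K * c ^ α / s ^ α := by
      rw [Real.div_rpow hc hs.le]; ring
    rw [hlim] at h2
    refine Tendsto.congr' ?_ h2
    filter_upwards [eventually_gt_atTop 0] with t ht
    have hset : {ω : Ω | s * t / c < W ω} = {ω : Ω | s * t < c * W ω} := by
      ext ω
      simp only [Set.mem_setOf_eq]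
      rw [div_lt_iff₀ hc0, mul_comm (W ω) c]
    simp only [Function.comp]
    rw [hset, ← mul_assoc, ← Real.mul_rpow (by positivity) (by positivity)]
    · congr 2
      field_simp
lemma core {Ω : Type*} [MeasurableSpace Ω] (μ : Measure Ω) [IsProbabilityMeasure μ]
    {d : ℕ} (c : Fin d → ℝ) (hc : ∀ j, 0 ≤ c j)
    (V : Fin d → Ω → ℝ) (hVmeas : ∀ j, Measurable (V j)) (hVnonneg : ∀ j ω, 0 ≤ V j ω)
    (hVindep : iIndepFun V μ)
    (K : Fin d → ℝ) {α : ℝ} (hα : 0 < α)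
    (htail : ∀ j, Tendsto (fun t : ℝ => t ^ α * (μ {ω | t < V j ω}).toReal) atTop
      (nhds (K j))) :
    Tendsto (fun t : ℝ => t ^ α * (μ {ω | t < ∑ j, c j * V j ω}).toReal) atTop
      (nhds (∑ j, K j * c j ^ α)) := by
  classical
  rcases Nat.eq_zero_or_pos d with hd | hd
  · subst hd
    simp only [Finset.univ_eq_empty, Finset.sum_empty]
    refine Tendsto.congr' ?_ (tendsto_const_nhds (x := (0:ℝ)))
    filter_upwards [eventually_gt_atTop 0] with t ht
    have hempty : {ω : Ω | t < 0} = ∅ := by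
      ext ω; simp only [Set.mem_setOf_eq, Set.mem_empty_iff_false, iff_false, not_lt]; linarith
    rw [hempty]; simp
  have hdpos : (0:ℝ) < d := by exact_mod_cast hd
  set Λ := ∑ j, K j * c j ^ α with hΛ
  -- measurability helpers
  have hBmeas : ∀ (j : Fin d) (x : ℝ), MeasurableSet {y : ℝ | x < c j * y} := fun j x =>
    measurableSet_lt measurable_const (measurable_id.const_mul _)
  have hEmeas : ∀ (j : Fin d) (x : ℝ), MeasurableSet {ω | x < c j * V j ω} := fun j x =>
    measurableSet_lt measurable_const ((hVmeas j).const_mul _)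
  have hSummeas : ∀ t : ℝ, MeasurableSet {ω | t < ∑ j, c j * V j ω} := fun t =>
    measurableSet_lt measurable_const (Finset.measurable_sum _ fun j _ => (hVmeas j).const_mul _)
  -- scaled tail limits
  have hp_tend : ∀ (j : Fin d) {s : ℝ}, 0 < s →
      Tendsto (fun t => t ^ α * (μ {ω | s * t < c j * V j ω}).toReal) atTop
        (nhds (K j * c j ^ α / s ^ α)) :=
    fun j s hs => tail_scaled μ (V j) hα (htail j) (hc j) hs
  have hp_zero : ∀ (j : Fin d) {s : ℝ}, 0 < s →
      Tendsto (fun t => (μ {ω | s * t < c j * V j ω}).toReal) atTop (nhds 0) :=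
    fun j s hs => aux_to_zero hα (hp_tend j hs)
  have hp1_tend : ∀ j : Fin d,
      Tendsto (fun t => t ^ α * (μ {ω | t < c j * V j ω}).toReal) atTop
        (nhds (K j * c j ^ α)) := by
    intro j
    have := hp_tend j one_pos
    simpa [one_mul, Real.one_rpow] using this
  have hp1_zero : ∀ j : Fin d,
      Tendsto (fun t => (μ {ω | t < c j * V j ω}).toReal) atTop (nhds 0) :=
    fun j => aux_to_zero hα (hp1_tend j)
  -- S and lower bound
  set S : ℝ → ℝ := fun t => ∑ j, (μ {ω | t < c j * V j ω}).toReal with hSdef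
  have hS_tend : Tendsto (fun t => t ^ α * S t) atTop (nhds Λ) := by
    have : Tendsto (fun t => ∑ j, t ^ α * (μ {ω | t < c j * V j ω}).toReal) atTop
        (nhds (∑ j, K j * c j ^ α)) := tendsto_finset_sum _ fun j _ => hp1_tend j
    refine this.congr fun t => ?_
    rw [hSdef, Finset.mul_sum]
  have hS0 : Tendsto S atTop (nhds 0) := by
    have : Tendsto S atTop (nhds (∑ _j : Fin d, (0:ℝ))) :=
      tendsto_finset_sum _ fun j _ => hp1_zero j
    simpa using this
  have hlow_tend : Tendsto (fun t => t ^ α * S t - t ^ α * S t * S t) atTop (nhds Λ) := by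
    have := hS_tend.sub (hS_tend.mul hS0)
    simpa using this
  have hlow_le : ∀ᶠ t in atTop,
      t ^ α * S t - t ^ α * S t * S t ≤ t ^ α * (μ {ω | t < ∑ j, c j * V j ω}).toReal := by
    filter_upwards [eventually_gt_atTop 0] with t ht
    have key : S t - S t ^ 2 ≤ (μ {ω | t < ∑ j, c j * V j ω}).toReal := by
      -- union of single-jump events
      have hUsub : (⋃ j, {ω | t < c j * V j ω}) ⊆ {ω | t < ∑ j, c j * V j ω} := by
        intro ω hω
        obtain ⟨j, hj⟩ := Set.mem_iUnion.1 hω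
        exact lt_of_lt_of_le hj
          (Finset.single_le_sum (fun k _ => mul_nonneg (hc k) (hVnonneg k ω))
            (Finset.mem_univ j))
      have hprod : μ ((⋃ j, {ω | t < c j * V j ω})ᶜ)
          = ∏ j, μ ({ω | t < c j * V j ω}ᶜ) := by
        have hc1 : (⋃ j, {ω | t < c j * V j ω})ᶜ = ⋂ j, (V j) ⁻¹' {y : ℝ | t < c j * y}ᶜ := by
          rw [Set.compl_iUnion]
          rfl
        rw [hc1]
        rw [hVindep.meas_iInter (fun j => ⟨{y : ℝ | t < c j * y}ᶜ, (hBmeas j t).compl, rfl⟩)]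
        rfl
      have hU : (μ (⋃ j, {ω | t < c j * V j ω})).toReal
          = 1 - ∏ j, (1 - (μ {ω | t < c j * V j ω}).toReal) := by
        have hmU : MeasurableSet (⋃ j, {ω : Ω | t < c j * V j ω}) :=
          MeasurableSet.iUnion fun j => hEmeas j t
        have h1 : μ (⋃ j, {ω | t < c j * V j ω})
            = 1 - μ ((⋃ j, {ω | t < c j * V j ω})ᶜ) := by
          rw [← prob_compl_eq_one_sub hmU.compl, compl_compl]
        rw [h1, ENNReal.toReal_sub_of_le (prob_le_one) ENNReal.one_ne_top, ENNReal.toReal_one]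
        congr 1
        rw [hprod, ENNReal.toReal_prod]
        refine Finset.prod_congr rfl fun j _ => ?_
        rw [prob_compl_eq_one_sub (hEmeas j t),
          ENNReal.toReal_sub_of_le (prob_le_one) ENNReal.one_ne_top, ENNReal.toReal_one]
      have hbonf : S t - S t ^ 2 ≤ 1 - ∏ j, (1 - (μ {ω | t < c j * V j ω}).toReal) := by
        have := aux_prod_one_sub Finset.univ
          (fun j : Fin d => (μ {ω | t < c j * V j ω}).toReal)
          (fun j _ => ENNReal.toReal_nonneg)
          (fun j _ => by
            rw [← ENNReal.toReal_one]
            exact ENNReal.toReal_mono ENNReal.one_ne_top prob_le_one)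
        rw [hSdef]
        simp only at this ⊢
        linarith
      refine le_trans hbonf ?_
      rw [← hU]
      exact ENNReal.toReal_mono (measure_ne_top μ _) (measure_mono hUsub)
    have : t ^ α * S t - t ^ α * S t * S t = t ^ α * (S t - S t ^ 2) := by ring
    rw [this]
    exact mul_le_mul_of_nonneg_left key (Real.rpow_nonneg ht.le α)
  -- upper bound machinery
  have hup : ∀ ε : ℝ, 0 < ε → ε < 1 →
      ∃ u : ℝ → ℝ, Tendsto u atTop (nhds (∑ j, K j * c j ^ α / (1 - ε) ^ α)) ∧
        ∀ᶠ t in atTop, t ^ α * (μ {ω | t < ∑ j, c j * V j ω}).toReal ≤ u t := by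
    intro ε hε0 hε1
    have hsd : (0:ℝ) < ε / d := by positivity
    have h1ε : (0:ℝ) < 1 - ε := by linarith
    refine ⟨fun t => (∑ j, t ^ α * (μ {ω | (1 - ε) * t < c j * V j ω}).toReal)
      + ∑ jk ∈ Finset.univ.offDiag,
          (t ^ α * (μ {ω | ε / d * t < c jk.1 * V jk.1 ω}).toReal)
            * (μ {ω | ε / d * t < c jk.2 * V jk.2 ω}).toReal, ?_, ?_⟩
    · have hA : Tendsto (fun t => ∑ j, t ^ α * (μ {ω | (1 - ε) * t < c j * V j ω}).toReal)
          atTop (nhds (∑ j, K j * c j ^ α / (1 - ε) ^ α)) :=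
        tendsto_finset_sum _ fun j _ => hp_tend j h1ε
      have hB : Tendsto (fun t => ∑ jk ∈ Finset.univ.offDiag,
          (t ^ α * (μ {ω | ε / d * t < c jk.1 * V jk.1 ω}).toReal)
            * (μ {ω | ε / d * t < c jk.2 * V jk.2 ω}).toReal) atTop (nhds 0) := by
        have h0 : Tendsto (fun t => ∑ jk ∈ Finset.univ.offDiag,
            (t ^ α * (μ {ω | ε / d * t < c jk.1 * V jk.1 ω}).toReal)
              * (μ {ω | ε / d * t < c jk.2 * V jk.2 ω}).toReal) atTop
            (nhds (∑ jk ∈ (Finset.univ.offDiag : Finset (Fin d × Fin d)),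
              (K jk.1 * c jk.1 ^ α / (ε / d) ^ α) * 0)) :=
          tendsto_finset_sum _ fun jk _ => (hp_tend jk.1 hsd).mul (hp_zero jk.2 hsd)
        simpa using h0
      simpa using hA.add hB
    · filter_upwards [eventually_ge_atTop 0] with t ht
      have hεt : 0 ≤ ε / d * t := by positivity
      have hincl : {ω | t < ∑ j, c j * V j ω} ⊆
          (⋃ j, {ω | (1 - ε) * t < c j * V j ω}) ∪
          (⋃ jk ∈ (Finset.univ.offDiag : Finset (Fin d × Fin d)),
            ({ω | ε / d * t < c jk.1 * V jk.1 ω} ∩ {ω | ε / d * t < c jk.2 * V jk.2 ω})) := by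
        intro ω hω
        by_contra hcon
        rw [Set.mem_union] at hcon
        push_neg at hcon
        obtain ⟨hA1, hA2⟩ := hcon
        simp only [Set.mem_iUnion, not_exists, Set.mem_setOf_eq, not_lt] at hA1
        have hA2' : ∀ j k : Fin d, j ≠ k →
            ¬(ε / d * t < c j * V j ω ∧ ε / d * t < c k * V k ω) := by
          intro j k hjk hcontra
          have hmemo : ((j, k) : Fin d × Fin d) ∈ (Finset.univ.offDiag : Finset (Fin d × Fin d)) :=
            Finset.mem_offDiag.2 ⟨Finset.mem_univ j, Finset.mem_univ k, hjk⟩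
          have hmem : ω ∈ ({ω | ε / d * t < c ((j, k) : Fin d × Fin d).1 * V ((j, k) : Fin d × Fin d).1 ω}
              ∩ {ω | ε / d * t < c ((j, k) : Fin d × Fin d).2 * V ((j, k) : Fin d × Fin d).2 ω}) :=
            ⟨hcontra.1, hcontra.2⟩
          exact hA2 (Set.mem_biUnion hmemo hmem)
        have hdd : (d : ℝ) * (ε / d * t) = ε * t := by field_simp
        have hsum_le : ∑ j, c j * V j ω ≤ t := by
          by_cases hex : ∃ j0, ε / d * t < c j0 * V j0 ω
          · obtain ⟨j0, hj0⟩ := hex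
            have hother : ∀ j ∈ Finset.univ.erase j0, c j * V j ω ≤ ε / d * t := by
              intro j hj
              by_contra hcon2
              push_neg at hcon2
              exact hA2' j j0 (Finset.ne_of_mem_erase hj) ⟨hcon2, hj0⟩
            have hsplit : c j0 * V j0 ω + ∑ j ∈ Finset.univ.erase j0, c j * V j ω
                = ∑ j, c j * V j ω :=
              Finset.add_sum_erase _ (fun j => c j * V j ω) (Finset.mem_univ j0)
            have hrest : ∑ j ∈ Finset.univ.erase j0, c j * V j ω ≤ (d : ℝ) * (ε / d * t) := by
              calc ∑ j ∈ Finset.univ.erase j0, c j * V j ω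
                  ≤ (Finset.univ.erase j0).card • (ε / d * t) :=
                    Finset.sum_le_card_nsmul _ _ _ hother
                _ = ((Finset.univ.erase j0).card : ℝ) * (ε / d * t) := nsmul_eq_mul _ _
                _ ≤ (d : ℝ) * (ε / d * t) := by
                    refine mul_le_mul_of_nonneg_right ?_ hεt
                    have : (Finset.univ.erase j0).card ≤ d := by
                      refine le_trans (Finset.card_erase_le) ?_
                      simp
                    exact_mod_cast this
            have hb1 := hA1 j0
            linarith
          · push_neg at hex
            have hle : ∑ j, c j * V j ω ≤ ∑ _j : Fin d, ε / d * t :=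
              Finset.sum_le_sum fun j _ => hex j
            rw [Finset.sum_const, Finset.card_univ, Fintype.card_fin, nsmul_eq_mul] at hle
            nlinarith [mul_nonneg h1ε.le ht]
        exact absurd hω (not_lt.2 hsum_le)
      have hpairmul : ∀ jk ∈ (Finset.univ.offDiag : Finset (Fin d × Fin d)),
          μ ({ω | ε / d * t < c jk.1 * V jk.1 ω} ∩ {ω | ε / d * t < c jk.2 * V jk.2 ω})
          = μ {ω | ε / d * t < c jk.1 * V jk.1 ω} * μ {ω | ε / d * t < c jk.2 * V jk.2 ω} := by
        intro jk hjk
        have hne : jk.1 ≠ jk.2 := (Finset.mem_offDiag.1 hjk).2.2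
        exact (hVindep.indepFun hne).measure_inter_preimage_eq_mul _ _
          (hBmeas jk.1 (ε / d * t)) (hBmeas jk.2 (ε / d * t))
      have hstep : μ {ω | t < ∑ j, c j * V j ω}
          ≤ (∑ j, μ {ω | (1 - ε) * t < c j * V j ω}) +
            ∑ jk ∈ (Finset.univ.offDiag : Finset (Fin d × Fin d)),
              μ ({ω | ε / d * t < c jk.1 * V jk.1 ω} ∩ {ω | ε / d * t < c jk.2 * V jk.2 ω}) := by
        refine le_trans (measure_mono hincl) (le_trans (measure_union_le _ _) ?_)
        gcongr
        · have h := measure_biUnion_finset_le (μ := μ) Finset.univ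
            (fun j : Fin d => {ω | (1 - ε) * t < c j * V j ω})
          simpa using h
        · exact measure_biUnion_finset_le _ _
      have hreal : (μ {ω | t < ∑ j, c j * V j ω}).toReal
          ≤ (∑ j, (μ {ω | (1 - ε) * t < c j * V j ω}).toReal) +
            ∑ jk ∈ (Finset.univ.offDiag : Finset (Fin d × Fin d)),
              (μ {ω | ε / d * t < c jk.1 * V jk.1 ω}).toReal
                * (μ {ω | ε / d * t < c jk.2 * V jk.2 ω}).toReal := by
        have hfin : ((∑ j, μ {ω | (1 - ε) * t < c j * V j ω}) +
            ∑ jk ∈ (Finset.univ.offDiag : Finset (Fin d × Fin d)),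
              μ ({ω | ε / d * t < c jk.1 * V jk.1 ω} ∩ {ω | ε / d * t < c jk.2 * V jk.2 ω}))
            ≠ ⊤ := by
          refine ENNReal.add_ne_top.2 ⟨?_, ?_⟩ <;>
            exact (ENNReal.sum_lt_top.2 fun _ _ => measure_lt_top μ _).ne
        refine le_trans (ENNReal.toReal_mono hfin hstep) ?_
        rw [ENNReal.toReal_add (by exact (ENNReal.sum_lt_top.2 fun _ _ => measure_lt_top μ _).ne)
          (by exact (ENNReal.sum_lt_top.2 fun _ _ => measure_lt_top μ _).ne),
          ENNReal.toReal_sum (fun _ _ => measure_ne_top μ _),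
          ENNReal.toReal_sum (fun _ _ => measure_ne_top μ _)]
        gcongr with jk hjk
        rw [hpairmul jk hjk, ENNReal.toReal_mul]
      calc t ^ α * (μ {ω | t < ∑ j, c j * V j ω}).toReal
          ≤ t ^ α * ((∑ j, (μ {ω | (1 - ε) * t < c j * V j ω}).toReal) +
              ∑ jk ∈ (Finset.univ.offDiag : Finset (Fin d × Fin d)),
                (μ {ω | ε / d * t < c jk.1 * V jk.1 ω}).toReal
                  * (μ {ω | ε / d * t < c jk.2 * V jk.2 ω}).toReal) :=
            mul_le_mul_of_nonneg_left hreal (Real.rpow_nonneg ht α)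
        _ = _ := by
            rw [mul_add, Finset.mul_sum, Finset.mul_sum]
            congr 1
            exact Finset.sum_congr rfl fun jk _ => by ring
  -- conclusion
  refine tendsto_order.2 ⟨?_, ?_⟩
  · intro b hb
    filter_upwards [hlow_le, hlow_tend.eventually (eventually_gt_nhds hb)] with t h1 h2
    exact lt_of_lt_of_le h2 h1
  · intro b hb
    have hcont : Tendsto (fun ε : ℝ => ∑ j, K j * c j ^ α / (1 - ε) ^ α)
        (nhdsWithin 0 (Set.Ioi 0)) (nhds Λ) := by
      have hc0 : Tendsto (fun ε : ℝ => ∑ j, K j * c j ^ α / (1 - ε) ^ α) (nhds 0)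
          (nhds (∑ j, K j * c j ^ α / (1 - (0:ℝ)) ^ α)) := by
        refine tendsto_finset_sum _ fun j _ => ?_
        have hca : ContinuousAt (fun ε : ℝ => K j * c j ^ α / (1 - ε) ^ α) 0 := by
          refine ContinuousAt.div continuousAt_const ?_ ?_
          · exact (Real.continuousAt_rpow_const _ α (Or.inl (by norm_num))).comp
              (continuousAt_const.sub continuousAt_id)
          · simp [Real.one_rpow]
        exact hca
      have := hc0.mono_left (nhdsWithin_le_nhds (s := Set.Ioi (0:ℝ)))
      simpa [Real.one_rpow, hΛ] using this
    have hev : ∀ᶠ ε in nhdsWithin (0:ℝ) (Set.Ioi 0),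
        (∑ j, K j * c j ^ α / (1 - ε) ^ α) < b := hcont.eventually (eventually_lt_nhds hb)
    have hev2 : ∀ᶠ ε in nhdsWithin (0:ℝ) (Set.Ioi 0), ε < 1 :=
      eventually_nhdsWithin_of_eventually_nhds (eventually_lt_nhds one_pos)
    obtain ⟨ε, hεb, hε1, hε0⟩ := (hev.and (hev2.and eventually_mem_nhdsWithin)).exists
    obtain ⟨u, hu_tend, hu_le⟩ := hup ε hε0 hε1
    filter_upwards [hu_le, hu_tend.eventually (eventually_lt_nhds hεb)] with t h1 h2
    exact lt_of_le_of_lt h1 h2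

/-- For a random `q × d` matrix `A` with entries in `[0,1]`, taking finitely
many values, independent of independent Pareto claims `V₁,…,V_d`, the exposure
`(AV)_i = Σ_j A_{ij} V_j` of agent `i` satisfies
`P((AV)_i > t) ~ (Σ_j K_j E[A_{ij}^α]) t^{-α}`, provided the constant is positive. -/
theorem stmt_5 {Ω : Type*} [MeasurableSpace Ω] (μ : Measure Ω) [IsProbabilityMeasure μ]
    (q d : ℕ) (A : Ω → Fin q → Fin d → ℝ)
    (hAmeas : Measurable A) (hAfin : (Set.range A).Finite)
    (hA01 : ∀ ω i j, A ω i j ∈ Set.Icc (0 : ℝ) 1)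
    (V : Fin d → Ω → ℝ) (hVmeas : ∀ j, Measurable (V j)) (hVnonneg : ∀ j ω, 0 ≤ V j ω)
    (hVindep : iIndepFun V μ)
    (hAV : IndepFun A (fun ω j => V j ω) μ)
    (K : Fin d → ℝ) (α : ℝ) (hK : ∀ j, 0 < K j) (hα : 0 < α)
    (htail : ∀ j, Tendsto (fun t : ℝ => t ^ α * (μ {ω | t < V j ω}).toReal) atTop
      (nhds (K j)))
    (i : Fin q)
    (hpos : 0 < ∑ j, K j * ∫ ω, (A ω i j) ^ α ∂μ) :
    Tendsto (fun t : ℝ => t ^ α * (μ {ω | t < ∑ j, A ω i j * V j ω}).toReal) atTop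
      (nhds (∑ j, K j * ∫ ω, (A ω i j) ^ α ∂μ)) := by
  classical
  set F : Finset (Fin q → Fin d → ℝ) := hAfin.toFinset with hF
  have hfinmeas : ∀ a : Fin q → Fin d → ℝ, MeasurableSet (A ⁻¹' {a}) := fun a =>
    hAmeas (measurableSet_singleton a)
  have hmemF : ∀ ω, A ω ∈ F := fun ω => hAfin.mem_toFinset.2 ⟨ω, rfl⟩
  have hSmeas : ∀ (a : Fin q → Fin d → ℝ) (t : ℝ),
      MeasurableSet {v : Fin d → ℝ | t < ∑ j, a i j * v j} := fun a t =>
    measurableSet_lt measurable_const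
      (Finset.measurable_sum _ fun j _ => (measurable_pi_apply j).const_mul _)
  have hdecomp : ∀ t : ℝ, μ {ω | t < ∑ j, A ω i j * V j ω}
      = ∑ a ∈ F, μ (A ⁻¹' {a}) * μ {ω | t < ∑ j, a i j * V j ω} := by
    intro t
    have hset : {ω | t < ∑ j, A ω i j * V j ω}
        = ⋃ a ∈ F, (A ⁻¹' {a} ∩ {ω | t < ∑ j, a i j * V j ω}) := by
      ext ω
      simp only [Set.mem_setOf_eq, Set.mem_iUnion, Set.mem_inter_iff, Set.mem_preimage,
        Set.mem_singleton_iff, exists_prop]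
      constructor
      · intro h
        exact ⟨A ω, hmemF ω, rfl, h⟩
      · rintro ⟨a, _, rfl, h⟩
        exact h
    rw [hset, measure_biUnion_finset ?_ ?_]
    · refine Finset.sum_congr rfl fun a _ => ?_
      have hrw : A ⁻¹' {a} ∩ {ω | t < ∑ j, a i j * V j ω}
          = A ⁻¹' {a} ∩ (fun ω => fun j => V j ω) ⁻¹' {v : Fin d → ℝ | t < ∑ j, a i j * v j} :=
        rfl
      rw [hrw, hAV.measure_inter_preimage_eq_mul _ _ (measurableSet_singleton a) (hSmeas a t)]
      rfl
    · intro a _ b _ hab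
      refine Set.disjoint_left.2 fun ω hωa hωb => hab ?_
      rw [← hωa.1, ← hωb.1]
    · intro a _
      exact (hfinmeas a).inter (measurableSet_lt measurable_const
        (Finset.measurable_sum _ fun j _ => (hVmeas j).const_mul _))
  have hcore : ∀ a ∈ F, Tendsto
      (fun t : ℝ => t ^ α * (μ {ω | t < ∑ j, a i j * V j ω}).toReal) atTop
      (nhds (∑ j, K j * (a i j) ^ α)) := by
    intro a ha
    obtain ⟨ω₀, hω₀⟩ := hAfin.mem_toFinset.1 ha
    exact core μ (fun j => a i j)
      (fun j => by rw [← hω₀]; exact (hA01 ω₀ i j).1) V hVmeas hVnonneg hVindep K hα htail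
  have htend : Tendsto (fun t : ℝ => ∑ a ∈ F,
      (μ (A ⁻¹' {a})).toReal * (t ^ α * (μ {ω | t < ∑ j, a i j * V j ω}).toReal)) atTop
      (nhds (∑ a ∈ F, (μ (A ⁻¹' {a})).toReal * ∑ j, K j * (a i j) ^ α)) :=
    tendsto_finset_sum _ fun a ha => (hcore a ha).const_mul _
  have hint : ∀ j : Fin d, ∫ ω, (A ω i j) ^ α ∂μ
      = ∑ a ∈ F, (μ (A ⁻¹' {a})).toReal * (a i j) ^ α := by
    intro j
    have hrepr : ∀ ω, (A ω i j) ^ α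
        = ∑ a ∈ F, Set.indicator (A ⁻¹' {a}) (fun _ => (a i j) ^ α) ω := by
      intro ω
      rw [Finset.sum_eq_single (A ω)]
      · rw [Set.indicator_of_mem (by exact rfl)]
      · intro b _ hne
        rw [Set.indicator_of_notMem]
        simp only [Set.mem_preimage, Set.mem_singleton_iff]
        exact fun h => hne h.symm
      · intro h
        exact absurd (hmemF ω) h
    calc ∫ ω, (A ω i j) ^ α ∂μ
        = ∫ ω, ∑ a ∈ F, Set.indicator (A ⁻¹' {a}) (fun _ => (a i j) ^ α) ω ∂μ := by
          exact integral_congr_ae (Filter.Eventually.of_forall hrepr)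
      _ = ∑ a ∈ F, ∫ ω, Set.indicator (A ⁻¹' {a}) (fun _ => (a i j) ^ α) ω ∂μ :=
          integral_finset_sum _ fun a _ =>
            (integrable_const _).indicator (hfinmeas a)
      _ = ∑ a ∈ F, (μ (A ⁻¹' {a})).toReal * (a i j) ^ α := by
          refine Finset.sum_congr rfl fun a _ => ?_
          rw [integral_indicator_const _ (hfinmeas a)]
          simp [smul_eq_mul, measureReal_def]
  have hlim : ∑ a ∈ F, (μ (A ⁻¹' {a})).toReal * ∑ j, K j * (a i j) ^ α
      = ∑ j, K j * ∫ ω, (A ω i j) ^ α ∂μ := by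
    simp_rw [Finset.mul_sum]
    rw [Finset.sum_comm]
    refine Finset.sum_congr rfl fun j _ => ?_
    rw [hint j, Finset.mul_sum]
    exact Finset.sum_congr rfl fun a _ => by ring
  have hfun : ∀ t : ℝ, t ^ α * (μ {ω | t < ∑ j, A ω i j * V j ω}).toReal
      = ∑ a ∈ F, (μ (A ⁻¹' {a})).toReal * (t ^ α * (μ {ω | t < ∑ j, a i j * V j ω}).toReal) := by
    intro t
    rw [hdecomp t, ENNReal.toReal_sum (fun a _ =>
      ENNReal.mul_ne_top (measure_ne_top _ _) (measure_ne_top _ _)), Finset.mul_sum]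
    exact Finset.sum_congr rfl fun a _ => by rw [ENNReal.toReal_mul]; ring
  rw [← hlim]
  exact htend.congr fun t => (hfun t).symm
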